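/- For every integer k with k ≥ (5/2)·n·ln n, it holds that A_k ≥ (k − (5/2)·n·ln n)²/(36·n²). -/

import Mathlib

noncomputable def rr (n : ℕ) : ℝ := (n:ℝ) / ((n:ℝ) - 1)
noncomputable def a1r (n : ℕ) : ℝ := 1 / (Real.sqrt 2 * (n:ℝ) ^ ((3:ℝ)/2))
noncomputable def k0r (n : ℕ) : ℝ := 5/2 * (n:ℝ) * Real.log n
noncomputable def Qf (n k : ℕ) : ℝ :=
  ((n:ℝ)-1)/(4*(n:ℝ)) + max (((k:ℝ)+1) - k0r n) 0 / (6*(n:ℝ))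
noncomputable def Ff (n k : ℕ) : ℝ := a1r n / 2 * rr n ^ k
noncomputable def Phi (n k : ℕ) : ℝ := min (Ff n k) (Qf n k ^ 2)

lemma hnR {n : ℕ} (hn : 4 ≤ n) : (4:ℝ) ≤ (n:ℝ) := by exact_mod_cast hn

lemma sqrt2_le : Real.sqrt 2 ≤ 3/2 := by
  nlinarith [Real.sq_sqrt (by norm_num : (0:ℝ) ≤ 2), Real.sqrt_nonneg 2]

lemma sqrt2_pos : (0:ℝ) < Real.sqrt 2 := Real.sqrt_pos.2 (by norm_num)

lemma n32_pos {n : ℕ} (hn : 4 ≤ n) : (0:ℝ) < (n:ℝ) ^ ((3:ℝ)/2) :=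
  Real.rpow_pos_of_pos (by have := hnR hn; linarith) _

lemma a1r_pos {n : ℕ} (hn : 4 ≤ n) : 0 < a1r n := by
  have h1 := n32_pos hn
  have h2 := sqrt2_pos
  unfold a1r; positivity

lemma rr_pos {n : ℕ} (hn : 4 ≤ n) : 0 < rr n := by
  have := hnR hn
  exact div_pos (by linarith) (by linarith)

lemma rr_ge_one {n : ℕ} (hn : 4 ≤ n) : 1 ≤ rr n := by
  have := hnR hn
  rw [rr, le_div_iff₀ (by linarith)]; linarith

lemma rr_pow_pos {n : ℕ} (hn : 4 ≤ n) (k : ℕ) : 0 < rr n ^ k :=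
  pow_pos (rr_pos hn) k

lemma Ff_pos {n : ℕ} (hn : 4 ≤ n) (k : ℕ) : 0 < Ff n k := by
  have := a1r_pos hn; have := rr_pow_pos hn k
  unfold Ff; positivity

lemma log_rr {n : ℕ} (hn : 4 ≤ n) : 1/(n:ℝ) ≤ Real.log (rr n) := by
  have h4 := hnR hn
  have hne : (n:ℝ) ≠ 0 := by linarith
  have hne1 : (n:ℝ) - 1 ≠ 0 := by linarith
  have h1 : Real.exp (1/(n:ℝ)) ≤ rr n := by
    have he : 1 - 1/(n:ℝ) ≤ Real.exp (-(1/(n:ℝ))) := by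
      have := Real.add_one_le_exp (-(1/(n:ℝ))); linarith
    have hpos : (0:ℝ) < 1 - 1/(n:ℝ) := by
      rw [sub_pos, div_lt_one (by linarith)]; linarith
    have h2 : Real.exp (1/(n:ℝ)) = (Real.exp (-(1/(n:ℝ))))⁻¹ := by
      rw [← Real.exp_neg]; ring_nf
    have h3 : rr n = (1 - 1/(n:ℝ))⁻¹ := by
      rw [rr, inv_eq_one_div]
      rw [div_eq_div_iff hne1 (by linarith)]
      field_simp
    rw [h2, h3]
    exact inv_anti₀ hpos he
  calc 1/(n:ℝ) = Real.log (Real.exp (1/(n:ℝ))) := (Real.log_exp _).symm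
    _ ≤ Real.log (rr n) := Real.log_le_log (Real.exp_pos _) h1

lemma rr_pow_ge {n : ℕ} (hn : 4 ≤ n) (k : ℕ) :
    Real.exp ((k:ℝ) * (1/(n:ℝ))) ≤ rr n ^ k := by
  have h1 : rr n ^ k = Real.exp ((k:ℝ) * Real.log (rr n)) := by
    rw [← Real.log_pow, Real.exp_log (rr_pow_pos hn k)]
  rw [h1]
  apply Real.exp_le_exp.2
  exact mul_le_mul_of_nonneg_left (log_rr hn) (by positivity)

lemma Qf_ge_c {n : ℕ} (hn : 4 ≤ n) (k : ℕ) : ((n:ℝ)-1)/(4*(n:ℝ)) ≤ Qf n k := by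
  have h4 := hnR hn
  have h : (0:ℝ) ≤ max (((k:ℝ)+1) - k0r n) 0 / (6*(n:ℝ)) :=
    div_nonneg (le_max_right _ _) (by linarith)
  unfold Qf; linarith

lemma Qf_nonneg {n : ℕ} (hn : 4 ≤ n) (k : ℕ) : 0 ≤ Qf n k := by
  have h4 := hnR hn
  have h : (0:ℝ) ≤ ((n:ℝ)-1)/(4*(n:ℝ)) := div_nonneg (by linarith) (by linarith)
  linarith [Qf_ge_c hn k]

lemma Qf_succ_le {n : ℕ} (hn : 4 ≤ n) (k : ℕ) :
    Qf n (k+1) ≤ Qf n k + 1/(6*(n:ℝ)) := by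
  have h4 := hnR hn
  have h6 : (0:ℝ) < 6*(n:ℝ) := by linarith
  have hmax : max (((k:ℝ)+1+1) - k0r n) 0 ≤ max (((k:ℝ)+1) - k0r n) 0 + 1 := by
    rcases le_total (((k:ℝ)+1+1) - k0r n) 0 with h | h
    · have h0 : (0:ℝ) ≤ max (((k:ℝ)+1) - k0r n) 0 := le_max_right _ _
      rw [max_eq_right h]; linarith
    · rw [max_eq_left h]
      have h0 : ((k:ℝ)+1) - k0r n ≤ max (((k:ℝ)+1) - k0r n) 0 := le_max_left _ _
      linarith
  have hdiv : max (((k:ℝ)+1+1) - k0r n) 0 / (6*(n:ℝ)) ≤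
      (max (((k:ℝ)+1) - k0r n) 0 + 1) / (6*(n:ℝ)) := by gcongr
  rw [add_div] at hdiv
  unfold Qf
  push_cast
  linarith

lemma Dprime {n : ℕ} (hn : 4 ≤ n) {k : ℕ} (h : k0r n ≤ (k:ℝ)+1) :
    Qf n k ^ 2 ≤ Ff n k := by
  have h4 := hnR hn
  have hne : (n:ℝ) ≠ 0 := by linarith
  set t : ℝ := ((k:ℝ)+1) - k0r n with ht'
  have ht : 0 ≤ t := by rw [ht']; linarith
  have hQ : Qf n k = ((n:ℝ)-1)/(4*(n:ℝ)) + t/(6*(n:ℝ)) := by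
    rw [Qf, max_eq_left ht]
  have hQ1 : Qf n k ≤ 1 + t/(2*(n:ℝ)) := by
    rw [hQ]
    have h1 : ((n:ℝ)-1)/(4*(n:ℝ)) ≤ 1 := by
      rw [div_le_one (by linarith)]; linarith
    have h2 : t/(6*(n:ℝ)) ≤ t/(2*(n:ℝ)) :=
      div_le_div_of_nonneg_left ht (by linarith) (by linarith)
    linarith
  have hexp2 : (1 + t/(2*(n:ℝ)))^2 ≤ Real.exp (t/(n:ℝ)) := by
    have h1 : 1 + t/(2*(n:ℝ)) ≤ Real.exp (t/(2*(n:ℝ))) := by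
      have := Real.add_one_le_exp (t/(2*(n:ℝ))); linarith
    have hnn : (0:ℝ) ≤ 1 + t/(2*(n:ℝ)) := by positivity
    have h2 : (1 + t/(2*(n:ℝ)))^2 ≤ Real.exp (t/(2*(n:ℝ)))^2 :=
      pow_le_pow_left₀ hnn h1 2
    have h3 : Real.exp (t/(2*(n:ℝ)))^2 = Real.exp (t/(n:ℝ)) := by
      rw [sq, ← Real.exp_add]
      congr 1
      field_simp
      ring
    linarith
  have hr : Real.exp ((k:ℝ) * (1/(n:ℝ))) ≤ rr n ^ k := rr_pow_ge hn k
  have hkeq : (k:ℝ) * (1/(n:ℝ)) = Real.log n * (5/2) + (t/(n:ℝ) + (-1)/(n:ℝ)) := by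
    have hk : (k:ℝ) = k0r n + t - 1 := by rw [ht']; ring
    rw [hk, k0r]
    field_simp
    ring
  rw [hkeq, Real.exp_add, Real.exp_add] at hr
  have h52 : Real.exp (Real.log n * (5/2)) = (n:ℝ)^((3:ℝ)/2) * n := by
    rw [← Real.rpow_def_of_pos (by linarith : (0:ℝ) < (n:ℝ))]
    rw [show (5:ℝ)/2 = (3:ℝ)/2 + 1 by norm_num,
      Real.rpow_add (by linarith : (0:ℝ) < (n:ℝ)), Real.rpow_one]
  rw [h52] at hr
  have hem : 1 - 1/(n:ℝ) ≤ Real.exp ((-1)/(n:ℝ)) := by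
    have h0 := Real.add_one_le_exp ((-1)/(n:ℝ))
    have : (-1:ℝ)/(n:ℝ) = -(1/(n:ℝ)) := by ring
    rw [this] at h0 ⊢
    linarith
  have hs2 := sqrt2_le
  have hs2p := sqrt2_pos
  have h32 := n32_pos hn
  have e1 : (0:ℝ) < Real.exp (t/(n:ℝ)) := Real.exp_pos _
  have e2 : (0:ℝ) < Real.exp ((-1)/(n:ℝ)) := Real.exp_pos _
  have hFf : Real.exp (t/(n:ℝ)) ≤ Ff n k := by
    have step : a1r n / 2 * ((n:ℝ)^((3:ℝ)/2) * (n:ℝ) *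
        (Real.exp (t/(n:ℝ)) * Real.exp ((-1)/(n:ℝ)))) ≤ Ff n k := by
      rw [Ff]
      have := a1r_pos hn
      exact mul_le_mul_of_nonneg_left hr (by positivity)
    have lhs_eq : a1r n / 2 * ((n:ℝ)^((3:ℝ)/2) * (n:ℝ) *
        (Real.exp (t/(n:ℝ)) * Real.exp ((-1)/(n:ℝ)))) =
        (n:ℝ) * Real.exp (t/(n:ℝ)) * Real.exp ((-1)/(n:ℝ)) / (2 * Real.sqrt 2) := by
      rw [a1r]
      field_simp
    rw [lhs_eq] at step
    refine le_trans ?_ step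
    rw [le_div_iff₀ (by positivity)]
    have hne2 : (n:ℝ) * Real.exp ((-1)/(n:ℝ)) ≥ (n:ℝ) - 1 := by
      have := mul_le_mul_of_nonneg_left hem (by linarith : (0:ℝ) ≤ (n:ℝ))
      have heq : (n:ℝ) * (1 - 1/(n:ℝ)) = (n:ℝ) - 1 := by field_simp
      linarith
    nlinarith [mul_le_mul_of_nonneg_left hne2.le e1.le]
  have hQnn := Qf_nonneg hn k
  calc Qf n k ^ 2 ≤ (1 + t/(2*(n:ℝ)))^2 := pow_le_pow_left₀ hQnn hQ1 2
    _ ≤ Real.exp (t/(n:ℝ)) := hexp2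
    _ ≤ Ff n k := hFf

lemma Phi_nonneg {n : ℕ} (hn : 4 ≤ n) (k : ℕ) : 0 ≤ Phi n k :=
  le_min (Ff_pos hn k).le (sq_nonneg _)

lemma Phi_le_sq {n : ℕ} (hn : 4 ≤ n) (k : ℕ) :
    Phi n (k+1) ≤ rr n ^ 2 * Phi n k := by
  have h4 := hnR hn
  have hne1 : ((n:ℝ)-1) ≠ 0 := by linarith
  have hr1 := rr_ge_one hn
  have hrp := rr_pos hn
  rcases le_total (Ff n k) (Qf n k ^ 2) with hc | hc
  · have hPk : Phi n k = Ff n k := min_eq_left hc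
    have h2 : Phi n (k+1) ≤ Ff n (k+1) := min_le_left _ _
    have h1 : Ff n (k+1) = rr n * Ff n k := by
      rw [Ff, Ff, pow_succ]; ring
    rw [hPk]
    nlinarith [mul_nonneg (mul_nonneg hrp.le (Ff_pos hn k).le) (sub_nonneg.2 hr1)]
  · have hPk : Phi n k = Qf n k ^ 2 := min_eq_right hc
    have h2 : Phi n (k+1) ≤ Qf n (k+1)^2 := min_le_right _ _
    have hQs := Qf_succ_le hn k
    have hQc := Qf_ge_c hn k
    have hQnn := Qf_nonneg hn k
    have hQ'nn := Qf_nonneg hn (k+1)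
    have hkey : Qf n (k+1) ≤ rr n * Qf n k := by
      have hd : 1/(6*(n:ℝ)) ≤ (rr n - 1) * Qf n k := by
        have hr : rr n - 1 = 1/((n:ℝ)-1) := by
          rw [rr]; field_simp; ring
        rw [hr]
        have h1nn : (0:ℝ) ≤ 1/((n:ℝ)-1) := le_of_lt (div_pos one_pos (by linarith))
        have step1 : ((n:ℝ)-1)/(4*(n:ℝ)) * (1/((n:ℝ)-1)) ≤ Qf n k * (1/((n:ℝ)-1)) :=
          mul_le_mul_of_nonneg_right hQc h1nn
        have step2 : ((n:ℝ)-1)/(4*(n:ℝ)) * (1/((n:ℝ)-1)) = 1/(4*(n:ℝ)) := by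
          field_simp
        have step3 : 1/(6*(n:ℝ)) ≤ 1/(4*(n:ℝ)) :=
          div_le_div_of_nonneg_left (by norm_num) (by linarith) (by linarith)
        calc 1/(6*(n:ℝ)) ≤ 1/(4*(n:ℝ)) := step3
          _ = ((n:ℝ)-1)/(4*(n:ℝ)) * (1/((n:ℝ)-1)) := step2.symm
          _ ≤ Qf n k * (1/((n:ℝ)-1)) := step1
          _ = 1/((n:ℝ)-1) * Qf n k := by ring
      linarith
    rw [hPk]
    nlinarith [hkey, hQ'nn, hQnn]

lemma sqrt_Phi_succ {n : ℕ} (hn : 4 ≤ n) (k : ℕ) :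
    Real.sqrt (Phi n (k+1)) ≤ rr n * Real.sqrt (Phi n k) := by
  have h1 := Phi_le_sq hn k
  have h2 : Real.sqrt (Phi n (k+1)) ≤ Real.sqrt (rr n ^2 * Phi n k) :=
    Real.sqrt_le_sqrt h1
  rw [Real.sqrt_mul (sq_nonneg _), Real.sqrt_sq (rr_pos hn).le] at h2
  exact h2

set_option maxHeartbeats 1000000 in
lemma star {n : ℕ} (hn : 4 ≤ n) (k : ℕ) :
    Phi n (k+1) ≤ Phi n k +
      min (a1r n/((n:ℝ)-1) * rr n ^ k) (Real.sqrt (Phi n k) / (2*(n:ℝ))) := by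
  have h4 := hnR hn
  have hne : (n:ℝ) ≠ 0 := by linarith
  have hne1 : ((n:ℝ)-1) ≠ 0 := by linarith
  have hQc := Qf_ge_c hn k
  have hQnn := Qf_nonneg hn k
  have hQ'nn := Qf_nonneg hn (k+1)
  have hQs := Qf_succ_le hn k
  rcases le_or_gt (Qf n k ^ 2) (Ff n k) with hc | hc
  · have hmin : Phi n k = Qf n k ^ 2 := min_eq_right hc
    have hsq : Real.sqrt (Phi n k) = Qf n k := by
      rw [hmin, Real.sqrt_sq hQnn]
    rw [hsq, hmin]
    set Q := Qf n k with hQdef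
    set s : ℝ := 1/(6*(n:ℝ)) with hsdef
    have hsnn : (0:ℝ) ≤ s := by
      rw [hsdef]; positivity
    have hsQ : s ≤ Q := by
      have h1 : s ≤ ((n:ℝ)-1)/(4*(n:ℝ)) := by
        rw [hsdef, div_le_div_iff₀ (by linarith) (by linarith)]
        nlinarith
      linarith
    have inc1 : Qf n (k+1)^2 ≤ Q^2 + (2*Q*s + s^2) := by
      nlinarith [hQs, hQ'nn, hQnn, hsnn]
    have bound1 : 2*Q*s + s^2 ≤ Q/(2*(n:ℝ)) := by
      have h1 : s*s ≤ Q*s := mul_le_mul_of_nonneg_right hsQ hsnn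
      have h2 : 3*(Q*s) = Q/(2*(n:ℝ)) := by
        rw [hsdef]; field_simp; ring
      nlinarith
    have bound2 : Q/(2*(n:ℝ)) ≤ a1r n/((n:ℝ)-1) * rr n ^ k := by
      have hF : a1r n/((n:ℝ)-1) * rr n ^ k = 2*(Ff n k)/((n:ℝ)-1) := by
        rw [Ff]; ring
      rw [hF]
      have h2Q : 2*(Q^2)/((n:ℝ)-1) ≤ 2*(Ff n k)/((n:ℝ)-1) :=
        div_le_div_of_nonneg_right (by linarith) (by linarith)
      refine le_trans ?_ h2Q
      rw [div_le_div_iff₀ (by linarith) (by linarith)]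
      have hcc : (n:ℝ)-1 ≤ Q*(4*(n:ℝ)) := (div_le_iff₀ (by linarith)).1 hQc
      nlinarith
    calc Phi n (k+1) ≤ Qf n (k+1)^2 := min_le_right _ _
      _ ≤ Q^2 + (2*Q*s + s^2) := inc1
      _ ≤ Q^2 + min (a1r n/((n:ℝ)-1) * rr n ^ k) (Q/(2*(n:ℝ))) := by
          have := le_min (le_trans bound1 bound2) bound1
          linarith
  · have hmin : Phi n k = Ff n k := min_eq_left hc.le
    have hFth : Ff n k ≤ (((n:ℝ)-1)/(2*(n:ℝ)))^2 := by
      by_contra hcon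
      push_neg at hcon
      have hQ2 : (((n:ℝ)-1)/(2*(n:ℝ)))^2 < Qf n k^2 := lt_trans hcon hc
      have hcnn : (0:ℝ) ≤ ((n:ℝ)-1)/(2*(n:ℝ)) :=
        le_of_lt (div_pos (by linarith) (by linarith))
      have hQgt : ((n:ℝ)-1)/(2*(n:ℝ)) < Qf n k := by nlinarith
      have hmaxpos : 0 < max (((k:ℝ)+1) - k0r n) 0 := by
        by_contra hm
        push_neg at hm
        have hmz : max (((k:ℝ)+1) - k0r n) 0 = 0 :=
          le_antisymm hm (le_max_right _ _)
        rw [Qf, hmz, zero_div, add_zero] at hQgt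
        have : ((n:ℝ)-1)/(4*(n:ℝ)) < ((n:ℝ)-1)/(2*(n:ℝ)) := by
          rw [div_lt_div_iff₀ (by linarith) (by linarith)]
          nlinarith
        linarith
      have hk0 : k0r n ≤ (k:ℝ)+1 := by
        rcases max_cases (((k:ℝ)+1) - k0r n) 0 with ⟨he, _⟩ | ⟨he, _⟩
        · rw [he] at hmaxpos; linarith
        · rw [he] at hmaxpos; linarith
      linarith [Dprime hn hk0]
    rw [hmin]
    have hR : a1r n/((n:ℝ)-1) * rr n ^ k = 2*Ff n k/((n:ℝ)-1) := by
      rw [Ff]; ring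
    have hF' : Ff n (k+1) = Ff n k + (a1r n/((n:ℝ)-1) * rr n ^ k)/2 := by
      have h1 : Ff n (k+1) = Ff n k * rr n := by
        rw [Ff, Ff, pow_succ]; ring
      rw [h1, hR, rr]
      field_simp
      ring
    have hgpos : (0:ℝ) < a1r n/((n:ℝ)-1) * rr n ^ k :=
      mul_pos (div_pos (a1r_pos hn) (by linarith)) (rr_pow_pos hn k)
    have hhalf1 : (a1r n/((n:ℝ)-1) * rr n ^ k)/2 ≤ a1r n/((n:ℝ)-1) * rr n ^ k := by
      linarith
    have hhalf2 : (a1r n/((n:ℝ)-1) * rr n ^ k)/2 ≤ Real.sqrt (Ff n k)/(2*(n:ℝ)) := by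
      have hFpos := Ff_pos hn k
      have hD : (0:ℝ) < ((n:ℝ)-1) := by linarith
      rw [hR]
      have hxnn : (0:ℝ) ≤ 2*(n:ℝ)*Ff n k/((n:ℝ)-1) :=
        le_of_lt (div_pos (by nlinarith) hD)
      have hFb : 4*(n:ℝ)^2*Ff n k ≤ ((n:ℝ)-1)^2 := by
        have h2 := hFth
        rw [div_pow, le_div_iff₀ (by positivity : (0:ℝ) < (2*(n:ℝ))^2)] at h2
        nlinarith [h2]
      have hsq2 : (2*(n:ℝ)*Ff n k/((n:ℝ)-1))^2 ≤ Ff n k := by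
        rw [div_pow, div_le_iff₀ (pow_pos hD 2)]
        nlinarith [mul_le_mul_of_nonneg_left hFb hFpos.le]
      have target : 2*(n:ℝ)*Ff n k/((n:ℝ)-1) ≤ Real.sqrt (Ff n k) :=
        (Real.le_sqrt hxnn hFpos.le).2 hsq2
      have target2 : 2*(n:ℝ)*Ff n k ≤ Real.sqrt (Ff n k) * ((n:ℝ)-1) :=
        (div_le_iff₀ hD).1 target
      have hg : 2*Ff n k/((n:ℝ)-1)/2 = Ff n k/((n:ℝ)-1) := by ring
      rw [hg, div_le_div_iff₀ hD (by linarith : (0:ℝ) < 2*(n:ℝ))]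
      linarith [target2]
    calc Phi n (k+1) ≤ Ff n (k+1) := min_le_left _ _
      _ = Ff n k + (a1r n/((n:ℝ)-1) * rr n ^ k)/2 := hF'
      _ ≤ Ff n k + min (a1r n/((n:ℝ)-1) * rr n ^ k) (Real.sqrt (Ff n k)/(2*(n:ℝ))) := by
          have := le_min hhalf1 hhalf2
          linarith

set_option maxHeartbeats 1000000 in
theorem Ak_growth_rate (n : ℕ) (hn : 4 ≤ n)
    (a A : ℕ → ℝ)
    (ha1 : a 1 = 1 / (Real.sqrt 2 * (n : ℝ) ^ ((3:ℝ)/2)))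
    (ha2 : a 2 = a 1 / ((n : ℝ) - 1))
    (hA0 : A 0 = 0)
    (hArec : ∀ k, A (k+1) = A k + a (k+1))
    (harec : ∀ k, 1 ≤ k →
      a (k+2) = min ((n : ℝ) * a (k+1) / ((n : ℝ) - 1)) (Real.sqrt (A (k+1)) / (2 * n))) :
    ∀ k : ℕ, (5 / 2) * (n : ℝ) * Real.log n ≤ (k : ℝ) →
      A k ≥ ((k : ℝ) - (5 / 2) * (n : ℝ) * Real.log n)^2 / (36 * (n : ℝ)^2) := by
  intro k hk
  have h4 := hnR hn
  have hne : (n:ℝ) ≠ 0 := by linarith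
  have hne1 : ((n:ℝ)-1) ≠ 0 := by linarith
  have ha1' : a 1 = a1r n := by rw [ha1, a1r]
  have inv : ∀ m : ℕ, Phi n m ≤ A (m+1) ∧
      min (a1r n/((n:ℝ)-1) * rr n ^ m) (Real.sqrt (Phi n m) / (2*(n:ℝ))) ≤ a (m+2) := by
    intro m
    induction m with
    | zero =>
      constructor
      · have hA1 : A 1 = a1r n := by rw [hArec 0, hA0, ha1']; ring
        rw [hA1]
        have := a1r_pos hn
        calc Phi n 0 ≤ Ff n 0 := min_le_left _ _
          _ = a1r n/2 := by rw [Ff, pow_zero]; ring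
          _ ≤ a1r n := by linarith
      · have ha2' : a 2 = a1r n/((n:ℝ)-1) * rr n ^ 0 := by
          rw [ha2, ha1', pow_zero]; ring
        rw [ha2']
        exact min_le_left _ _
    | succ m ih =>
      obtain ⟨ihA, iha⟩ := ih
      have hA' : Phi n (m+1) ≤ A (m+2) := by
        have h1 : A (m+2) = A (m+1) + a (m+2) := hArec (m+1)
        have h2 := star hn m
        linarith
      refine ⟨hA', ?_⟩
      have hrec := harec (m+1) (by omega)
      rw [hrec]
      apply le_min
      · have hXY : min (a1r n/((n:ℝ)-1) * rr n ^ (m+1)) (Real.sqrt (Phi n (m+1)) / (2*(n:ℝ)))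
            ≤ rr n * min (a1r n/((n:ℝ)-1) * rr n ^ m) (Real.sqrt (Phi n m) / (2*(n:ℝ))) := by
          rcases le_total (a1r n/((n:ℝ)-1) * rr n ^ m) (Real.sqrt (Phi n m) / (2*(n:ℝ))) with hmm | hmm
          · rw [min_eq_left hmm]
            calc min (a1r n/((n:ℝ)-1) * rr n ^ (m+1)) (Real.sqrt (Phi n (m+1)) / (2*(n:ℝ)))
                ≤ a1r n/((n:ℝ)-1) * rr n ^ (m+1) := min_le_left _ _
              _ = rr n * (a1r n/((n:ℝ)-1) * rr n ^ m) := by rw [pow_succ]; ring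
          · rw [min_eq_right hmm]
            calc min (a1r n/((n:ℝ)-1) * rr n ^ (m+1)) (Real.sqrt (Phi n (m+1)) / (2*(n:ℝ)))
                ≤ Real.sqrt (Phi n (m+1)) / (2*(n:ℝ)) := min_le_right _ _
              _ ≤ (rr n * Real.sqrt (Phi n m)) / (2*(n:ℝ)) :=
                  div_le_div_of_nonneg_right (sqrt_Phi_succ hn m) (by linarith)
              _ = rr n * (Real.sqrt (Phi n m) / (2*(n:ℝ))) := by ring
        have h2 : rr n * min (a1r n/((n:ℝ)-1) * rr n ^ m) (Real.sqrt (Phi n m) / (2*(n:ℝ)))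
            ≤ rr n * a (m+2) := mul_le_mul_of_nonneg_left iha (rr_pos hn).le
        have h3 : rr n * a (m+2) = (n:ℝ) * a (m+1+1) / ((n:ℝ)-1) := by rw [rr]; ring
        linarith
      · calc min (a1r n/((n:ℝ)-1) * rr n ^ (m+1)) (Real.sqrt (Phi n (m+1)) / (2*(n:ℝ)))
            ≤ Real.sqrt (Phi n (m+1)) / (2*(n:ℝ)) := min_le_right _ _
          _ ≤ Real.sqrt (A (m+1+1)) / (2*(n:ℝ)) :=
              div_le_div_of_nonneg_right (Real.sqrt_le_sqrt hA') (by linarith)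
  have hlog : 0 < Real.log n := Real.log_pos (by exact_mod_cast (by omega : 1 < n))
  have hkne : k ≠ 0 := by
    rintro rfl
    simp only [Nat.cast_zero] at hk
    nlinarith
  obtain ⟨m, rfl⟩ := Nat.exists_eq_succ_of_ne_zero hkne
  push_cast at hk ⊢
  have hA := (inv m).1
  have hk' : k0r n ≤ (m:ℝ)+1 := by rw [k0r]; linarith
  set t : ℝ := ((m:ℝ)+1) - k0r n with htdef
  have ht : 0 ≤ t := by rw [htdef]; linarith [hk']
  have hQ : Qf n m = ((n:ℝ)-1)/(4*(n:ℝ)) + t/(6*(n:ℝ)) := by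
    rw [Qf, max_eq_left ht]
  have hQget : t/(6*(n:ℝ)) ≤ Qf n m := by
    rw [hQ]
    have h0 : (0:ℝ) ≤ ((n:ℝ)-1)/(4*(n:ℝ)) := div_nonneg (by linarith) (by linarith)
    linarith
  have htn : 0 ≤ t/(6*(n:ℝ)) := div_nonneg ht (by linarith)
  have hQ2 : (t/(6*(n:ℝ)))^2 ≤ Qf n m^2 := pow_le_pow_left₀ htn hQget 2
  have hPhi : (t/(6*(n:ℝ)))^2 ≤ Phi n m :=
    le_min (le_trans hQ2 (Dprime hn hk')) hQ2
  have hfin : (t/(6*(n:ℝ)))^2 = t^2/(36*(n:ℝ)^2) := by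
    rw [div_pow]
    congr 1
    ring
  have hteq : ((m:ℝ) + 1 - 5/2 * (n:ℝ) * Real.log n) = t := by rw [htdef, k0r]
  rw [ge_iff_le, hteq, ← hfin]
  linarith [hPhi, hA]
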